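/- If W is a deterministic function of X and also a deterministic function of Y (i.e., W = f(X) = g(Y) almost surely) and X - W - Y is a Markov chain, then I(X,Y;W) = I(X;Y); hence the Wyner common information C(X;Y) equals I(X;Y). -/

import Mathlib

open scoped BigOperators Classical

/-- `p` is a probability distribution on the finite type `A`. -/
def IsDist {A : Type*} [Fintype A] (p : A → ℝ) : Prop :=
  (∀ a, 0 ≤ p a) ∧ ∑ a, p a = 1

/-- The pushforward (distribution of the random variable `f`) of `p` under `f`. -/
noncomputable def push {Om A : Type*} [Fintype Om] (p : Om → ℝ) (f : Om → A) : A → ℝ :=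
  fun a => ∑ om, if f om = a then p om else 0

/-- Shannon entropy `H(f)` of the random variable `f` on the probability space `(Om, p)`. -/
noncomputable def ent {Om A : Type*} [Fintype Om] [Fintype A] (p : Om → ℝ) (f : Om → A) : ℝ :=
  ∑ a, Real.negMulLog (push p f a)

/-- Conditional Shannon entropy `H(f | g)`. -/
noncomputable def condEnt {Om A B : Type*} [Fintype Om] [Fintype A] [Fintype B]
    (p : Om → ℝ) (f : Om → A) (g : Om → B) : ℝ :=
  ent p (fun om => (f om, g om)) - ent p g

/-- Mutual information `I(f ; g)`. -/
noncomputable def mutInfo {Om A B : Type*} [Fintype Om] [Fintype A] [Fintype B]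
    (p : Om → ℝ) (f : Om → A) (g : Om → B) : ℝ :=
  ent p f + ent p g - ent p (fun om => (f om, g om))

/-- Conditional mutual information `I(f ; g | h)`. -/
noncomputable def condMutInfo {Om A B C : Type*} [Fintype Om] [Fintype A] [Fintype B] [Fintype C]
    (p : Om → ℝ) (f : Om → A) (g : Om → B) (h : Om → C) : ℝ :=
  ent p (fun om => (f om, h om)) + ent p (fun om => (g om, h om))
    - ent p (fun om => (f om, g om, h om)) - ent p h

section helpers
variable {Om A B : Type*} [Fintype Om] [Fintype A] [Fintype B]

lemma push_nonneg (p : Om → ℝ) (hp : ∀ om, 0 ≤ p om) (f : Om → A) (a : A) :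
    0 ≤ push p f a :=
  Finset.sum_nonneg fun om _ => by split <;> simp [hp om]

lemma sum_push (p : Om → ℝ) (f : Om → A) : ∑ a, push p f a = ∑ om, p om := by
  unfold push
  rw [Finset.sum_comm]
  exact Finset.sum_congr rfl fun om _ => by simp

lemma push_comp (p : Om → ℝ) (f : Om → A) (h : A → B) :
    push p (fun om => h (f om)) = push (push p f) h := by
  funext b
  unfold push
  have key : ∀ a : A, (if h a = b then (∑ om, if f om = a then p om else 0) else 0)
      = ∑ om, if f om = a then (if h (f om) = b then p om else 0) else 0 := by
    intro a
    by_cases hb : h a = b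
    · rw [if_pos hb]
      refine Finset.sum_congr rfl fun om _ => ?_
      by_cases hf : f om = a <;> simp [hf, hb]
    · rw [if_neg hb]
      symm; apply Finset.sum_eq_zero; intro om _
      by_cases hf : f om = a <;> simp [hf, hb]
  rw [Finset.sum_congr rfl (fun a _ => key a), Finset.sum_comm]
  exact Finset.sum_congr rfl fun om _ => by simp

lemma push_id (p : A → ℝ) : push p (fun a => a) = p := by
  funext a; simp [push]

lemma sum_mul_comp (p : Om → ℝ) (f : Om → A) (φ : A → ℝ) :
    ∑ om, p om * φ (f om) = ∑ a, push p f a * φ a := by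
  unfold push
  simp only [Finset.sum_mul, ite_mul, zero_mul]
  rw [Finset.sum_comm]
  exact Finset.sum_congr rfl fun om _ => by simp

lemma single_le_push (p : Om → ℝ) (hp : ∀ om, 0 ≤ p om) (f : Om → A) (om : Om) :
    p om ≤ push p f (f om) := by
  have := Finset.single_le_sum (f := fun om' => if f om' = f om then p om' else 0)
    (fun i _ => by by_cases hfi : f i = f om <;> simp [hfi, hp i]) (Finset.mem_univ om)
  simpa [push] using this

end helpers

section more
variable {Om A B : Type*} [Fintype Om] [Fintype A] [Fintype B]

set_option linter.unusedSectionVars false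

lemma isDist_push (p : Om → ℝ) (hp : IsDist p) (f : Om → A) : IsDist (push p f) :=
  ⟨push_nonneg p hp.1 f, by rw [sum_push]; exact hp.2⟩

lemma ent_congr (p : Om → ℝ) (hp : ∀ om, 0 ≤ p om) (u : Om → A) (v : Om → B) (e : B → A)
    (he : Function.Injective e) (h : ∀ om, p om ≠ 0 → u om = e (v om)) :
    ent p u = ent p v := by
  have hpush : ∀ b, push p u (e b) = push p v b := by
    intro b
    refine Finset.sum_congr rfl fun om _ => ?_
    by_cases hpom : p om = 0
    · simp [hpom]
    · rw [h om hpom]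
      simp [he.eq_iff]
  have hzero : ∀ a : A, (∀ b, a ≠ e b) → push p u a = 0 := by
    intro a ha
    apply Finset.sum_eq_zero; intro om _
    by_cases hpom : p om = 0
    · simp [hpom]
    · rw [h om hpom, if_neg (fun hc => ha (v om) hc.symm)]
  unfold ent
  calc ∑ a : A, Real.negMulLog (push p u a)
      = ∑ a ∈ Finset.univ.image e, Real.negMulLog (push p u a) := by
        symm
        apply Finset.sum_subset (Finset.subset_univ _)
        intro a _ ha
        have : ∀ b, a ≠ e b := by
          intro b hb
          exact ha (Finset.mem_image.2 ⟨b, Finset.mem_univ b, hb.symm⟩)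
        rw [hzero a this, Real.negMulLog_zero]
    _ = ∑ b : B, Real.negMulLog (push p u (e b)) :=
        Finset.sum_image (fun x _ y _ hxy => he hxy)
    _ = ∑ b : B, Real.negMulLog (push p v b) :=
        Finset.sum_congr rfl fun b _ => by rw [hpush b]

lemma ent_comp (p : Om → ℝ) (f : Om → A) (h : A → B) :
    ent p (fun om => h (f om)) = ent (push p f) h := by
  unfold ent
  rw [push_comp]

end more

section core
set_option linter.unusedSectionVars false
variable {A B C : Type*} [Fintype A] [Fintype B] [Fintype C]

lemma marg_fst (s : A × B × C → ℝ) (c : C) :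
    ∑ a, push s (fun t => (t.1, t.2.2)) (a, c) = push s (fun t => t.2.2) c := by
  unfold push
  rw [Finset.sum_comm]
  refine Finset.sum_congr rfl fun t _ => ?_
  by_cases hc : t.2.2 = c
  · rw [Finset.sum_eq_single t.1]
    · simp [hc]
    · intro a _ ha; rw [if_neg]; simp [Prod.ext_iff]; intro h; exact absurd h.symm ha
    · simp
  · rw [if_neg hc]
    apply Finset.sum_eq_zero; intro a _
    rw [if_neg]; simp [Prod.ext_iff, hc]

lemma marg_snd (s : A × B × C → ℝ) (c : C) :
    ∑ b, push s (fun t => (t.2.1, t.2.2)) (b, c) = push s (fun t => t.2.2) c := by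
  unfold push
  rw [Finset.sum_comm]
  refine Finset.sum_congr rfl fun t _ => ?_
  by_cases hc : t.2.2 = c
  · rw [Finset.sum_eq_single t.2.1]
    · simp [hc]
    · intro b _ hb; rw [if_neg]; simp [Prod.ext_iff]; intro h; exact absurd h.symm hb
    · simp
  · rw [if_neg hc]
    apply Finset.sum_eq_zero; intro b _
    rw [if_neg]; simp [Prod.ext_iff, hc]

lemma submod_core (s : A × B × C → ℝ) (hs : IsDist s) :
    ent s (fun t => t) + ent s (fun t => t.2.2)
      ≤ ent s (fun t => (t.1, t.2.2)) + ent s (fun t => (t.2.1, t.2.2)) := by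
  obtain ⟨hs0, hs1⟩ := hs
  set pAC := push s (fun t => (t.1, t.2.2)) with hpAC
  set pBC := push s (fun t => (t.2.1, t.2.2)) with hpBC
  set pC := push s (fun t => t.2.2) with hpC
  have pAC0 : ∀ a, 0 ≤ pAC a := push_nonneg s hs0 _
  have pBC0 : ∀ a, 0 ≤ pBC a := push_nonneg s hs0 _
  have pC0 : ∀ c, 0 ≤ pC c := push_nonneg s hs0 _
  -- pointwise inequality
  have key : ∀ t : A × B × C,
      s t * Real.log (pAC (t.1, t.2.2)) + s t * Real.log (pBC (t.2.1, t.2.2))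
        - s t * Real.log (s t) - s t * Real.log (pC t.2.2)
      ≤ pAC (t.1, t.2.2) * pBC (t.2.1, t.2.2) / pC t.2.2 - s t := by
    intro t
    by_cases hst : s t = 0
    · rw [hst]
      simp only [zero_mul, sub_zero, add_zero, zero_add, sub_zero]
      exact div_nonneg (mul_nonneg (pAC0 _) (pBC0 _)) (pC0 _)
    · have hpos : 0 < s t := lt_of_le_of_ne (hs0 t) (Ne.symm hst)
      have hAC : 0 < pAC (t.1, t.2.2) := lt_of_lt_of_le hpos (single_le_push s hs0 _ t)
      have hBC : 0 < pBC (t.2.1, t.2.2) := lt_of_lt_of_le hpos (single_le_push s hs0 _ t)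
      have hC : 0 < pC t.2.2 := lt_of_lt_of_le hpos (single_le_push s hs0 _ t)
      have hx : 0 < pAC (t.1, t.2.2) * pBC (t.2.1, t.2.2) / (s t * pC t.2.2) := by positivity
      have hlog := Real.log_le_sub_one_of_pos hx
      have hexp : Real.log (pAC (t.1, t.2.2) * pBC (t.2.1, t.2.2) / (s t * pC t.2.2))
          = Real.log (pAC (t.1, t.2.2)) + Real.log (pBC (t.2.1, t.2.2))
            - Real.log (s t) - Real.log (pC t.2.2) := by
        rw [Real.log_div (by positivity) (by positivity), Real.log_mul hAC.ne' hBC.ne',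
          Real.log_mul hst hC.ne']
        ring
      rw [hexp] at hlog
      have := mul_le_mul_of_nonneg_left hlog (le_of_lt hpos)
      calc s t * Real.log (pAC (t.1, t.2.2)) + s t * Real.log (pBC (t.2.1, t.2.2))
            - s t * Real.log (s t) - s t * Real.log (pC t.2.2)
          = s t * (Real.log (pAC (t.1, t.2.2)) + Real.log (pBC (t.2.1, t.2.2))
            - Real.log (s t) - Real.log (pC t.2.2)) := by ring
        _ ≤ s t * (pAC (t.1, t.2.2) * pBC (t.2.1, t.2.2) / (s t * pC t.2.2) - 1) := this
        _ = pAC (t.1, t.2.2) * pBC (t.2.1, t.2.2) / pC t.2.2 - s t := by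
            field_simp
  -- sum it up
  have hsum := Finset.sum_le_sum (fun t (_ : t ∈ Finset.univ) => key t)
  -- RHS sum = 0
  have hT : ∑ t : A × B × C, pAC (t.1, t.2.2) * pBC (t.2.1, t.2.2) / pC t.2.2 = 1 := by
    have step : ∑ t : A × B × C, pAC (t.1, t.2.2) * pBC (t.2.1, t.2.2) / pC t.2.2
        = ∑ c : C, ∑ a : A, ∑ b : B, pAC (a, c) * pBC (b, c) / pC c := by
      rw [Fintype.sum_prod_type]
      calc ∑ a : A, ∑ y : B × C, pAC (a, y.2) * pBC (y.1, y.2) / pC y.2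
          = ∑ a : A, ∑ b : B, ∑ c : C, pAC (a, c) * pBC (b, c) / pC c := by
            refine Finset.sum_congr rfl fun a _ => ?_
            rw [Fintype.sum_prod_type]
        _ = ∑ a : A, ∑ c : C, ∑ b : B, pAC (a, c) * pBC (b, c) / pC c :=
            Finset.sum_congr rfl fun a _ => Finset.sum_comm
        _ = ∑ c : C, ∑ a : A, ∑ b : B, pAC (a, c) * pBC (b, c) / pC c :=
            Finset.sum_comm
    rw [step]
    have : ∀ c : C, ∑ a, ∑ b, pAC (a, c) * pBC (b, c) / pC c = pC c := by
      intro c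
      have : ∑ a, ∑ b, pAC (a, c) * pBC (b, c) / pC c
          = (∑ a, pAC (a, c)) * (∑ b, pBC (b, c)) / pC c := by
        rw [Finset.sum_mul_sum, Finset.sum_div]
        refine Finset.sum_congr rfl fun a _ => ?_
        rw [Finset.sum_div]
      rw [this, marg_fst, marg_snd]
      by_cases hc : pC c = 0
      · simp [hc]
      · field_simp
        rfl
    rw [Finset.sum_congr rfl fun c _ => this c]
    rw [hpC, sum_push, hs1]
  have hRHS : ∑ t : A × B × C, (pAC (t.1, t.2.2) * pBC (t.2.1, t.2.2) / pC t.2.2 - s t) = 0 := by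
    rw [Finset.sum_sub_distrib, hT, hs1]; ring
  -- LHS sum pieces
  have hA : ∑ t : A × B × C, s t * Real.log (pAC (t.1, t.2.2))
      = -ent s (fun t => (t.1, t.2.2)) := by
    rw [sum_mul_comp s (fun t => (t.1, t.2.2)) (fun a => Real.log (pAC a))]
    unfold ent
    rw [← Finset.sum_neg_distrib]
    exact Finset.sum_congr rfl fun a _ => by rw [Real.negMulLog, hpAC]; ring
  have hB : ∑ t : A × B × C, s t * Real.log (pBC (t.2.1, t.2.2))
      = -ent s (fun t => (t.2.1, t.2.2)) := by
    rw [sum_mul_comp s (fun t => (t.2.1, t.2.2)) (fun a => Real.log (pBC a))]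
    unfold ent
    rw [← Finset.sum_neg_distrib]
    exact Finset.sum_congr rfl fun a _ => by rw [Real.negMulLog, hpBC]; ring
  have hCent : ∑ t : A × B × C, s t * Real.log (pC t.2.2) = -ent s (fun t => t.2.2) := by
    rw [sum_mul_comp s (fun t => t.2.2) (fun c => Real.log (pC c))]
    unfold ent
    rw [← Finset.sum_neg_distrib]
    exact Finset.sum_congr rfl fun c _ => by rw [Real.negMulLog, hpC]; ring
  have hId : ∑ t : A × B × C, s t * Real.log (s t) = -ent s (fun t => t) := by
    unfold ent
    rw [push_id, ← Finset.sum_neg_distrib]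
    exact Finset.sum_congr rfl fun t _ => by rw [Real.negMulLog]; ring
  have hLHS : ∑ t : A × B × C,
      (s t * Real.log (pAC (t.1, t.2.2)) + s t * Real.log (pBC (t.2.1, t.2.2))
        - s t * Real.log (s t) - s t * Real.log (pC t.2.2))
      = -ent s (fun t => (t.1, t.2.2)) - ent s (fun t => (t.2.1, t.2.2))
        + ent s (fun t => t) + ent s (fun t => t.2.2) := by
    simp only [Finset.sum_sub_distrib, Finset.sum_add_distrib]
    rw [hA, hB, hCent, hId]; ring
  rw [hLHS, hRHS] at hsum
  linarith

lemma submod {Om : Type*} [Fintype Om] (p : Om → ℝ) (hp : IsDist p)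
    (a : Om → A) (b : Om → B) (c : Om → C) :
    ent p (fun om => (a om, b om, c om)) + ent p c
      ≤ ent p (fun om => (a om, c om)) + ent p (fun om => (b om, c om)) := by
  set s := push p (fun om => (a om, b om, c om)) with hs
  have hsd : IsDist s := isDist_push p hp _
  have h1 : ent p (fun om => (a om, b om, c om)) = ent s (fun t => t) := by
    unfold ent
    rw [push_id]
  have h2 : ent p c = ent s (fun t => t.2.2) :=
    ent_comp p (fun om => (a om, b om, c om)) (fun t => t.2.2)
  have h3 : ent p (fun om => (a om, c om)) = ent s (fun t => (t.1, t.2.2)) :=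
    ent_comp p (fun om => (a om, b om, c om)) (fun t => (t.1, t.2.2))
  have h4 : ent p (fun om => (b om, c om)) = ent s (fun t => (t.2.1, t.2.2)) :=
    ent_comp p (fun om => (a om, b om, c om)) (fun t => (t.2.1, t.2.2))
  rw [h1, h2, h3, h4]
  exact submod_core s hsd

end core

/-- If `W = f(X) = g(Y)` almost surely for deterministic functions `f, g`, and
`X - W - Y` is a Markov chain, then `I(X,Y;W) = I(X;Y)`; hence the Wyner common
information `C(X;Y) = min_{W' : I(X;Y|W')=0} I(X,Y;W')` equals `I(X;Y)`
(the minimum is achieved by `W` and `I(X;Y)` lower bounds every candidate). -/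
theorem common_function_achieves_wyner {X Y W : Type*} [Fintype X] [Fintype Y] [Fintype W]
    (q : X × Y × W → ℝ) (hq : IsDist q) (f : X → W) (g : Y → W)
    (hfg : ∀ om : X × Y × W, q om ≠ 0 → om.2.2 = f om.1 ∧ om.2.2 = g om.2.1)
    (hMarkov : condMutInfo q (fun om => om.1) (fun om => om.2.1) (fun om => om.2.2) = 0) :
    mutInfo q (fun om => (om.1, om.2.1)) (fun om => om.2.2) =
      mutInfo q (fun om => om.1) (fun om => om.2.1) ∧
    ∀ (n : ℕ) (r : X × Y × Fin n → ℝ), IsDist r →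
      (∀ xy : X × Y, push r (fun om => (om.1, om.2.1)) xy
          = push q (fun om => (om.1, om.2.1)) xy) →
      condMutInfo r (fun om => om.1) (fun om => om.2.1) (fun om => om.2.2) = 0 →
      mutInfo q (fun om => om.1) (fun om => om.2.1) ≤
        mutInfo r (fun om => (om.1, om.2.1)) (fun om => om.2.2) := by
  simp only [condMutInfo] at hMarkov
  have hXW : ent q (fun om => (om.1, om.2.2)) = ent q (fun om => om.1) :=
    ent_congr q hq.1 _ _ (fun x => (x, f x)) (fun a b h => congrArg Prod.fst h)
      (fun om h => by rw [(hfg om h).1])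
  have hYW : ent q (fun om => (om.2.1, om.2.2)) = ent q (fun om => om.2.1) :=
    ent_congr q hq.1 _ _ (fun y => (y, g y)) (fun a b h => congrArg Prod.fst h)
      (fun om h => by rw [(hfg om h).2])
  have hXYW : ent q (fun om => (om.1, om.2.1, om.2.2)) = ent q (fun om => (om.1, om.2.1)) :=
    ent_congr q hq.1 _ _ (fun xy => (xy.1, xy.2, f xy.1))
      (by
        intro u v h
        simp only [Prod.mk.injEq] at h
        exact Prod.ext_iff.2 ⟨h.1, h.2.1⟩)
      (fun om h => by rw [(hfg om h).1])
  have hP : ent q (fun om => ((om.1, om.2.1), om.2.2)) = ent q (fun om => (om.1, om.2.1)) :=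
    ent_congr q hq.1 _ _ (fun xy => (xy, f xy.1)) (fun a b h => congrArg Prod.fst h)
      (fun om h => by rw [(hfg om h).1])
  constructor
  · simp only [mutInfo]
    rw [hP]
    linarith [hMarkov, hXW, hYW, hXYW]
  · intro n r hr hmarg hcmi
    simp only [condMutInfo] at hcmi
    simp only [mutInfo]
    -- transfer entropies from q to r
    have hpush_eq : push r (fun om : X × Y × Fin n => (om.1, om.2.1))
        = push q (fun om : X × Y × W => (om.1, om.2.1)) := funext hmarg
    have hentXY : ent r (fun om => (om.1, om.2.1)) = ent q (fun om => (om.1, om.2.1)) := by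
      unfold ent; rw [hpush_eq]
    have hentX : ent r (fun om => om.1) = ent q (fun om => om.1) := by
      have h1 : ent r (fun om => om.1)
          = ent (push r (fun om : X × Y × Fin n => (om.1, om.2.1))) Prod.fst :=
        ent_comp r (fun om => (om.1, om.2.1)) Prod.fst
      have h2 : ent q (fun om => om.1)
          = ent (push q (fun om : X × Y × W => (om.1, om.2.1))) Prod.fst :=
        ent_comp q (fun om => (om.1, om.2.1)) Prod.fst
      rw [h1, h2, hpush_eq]
    have hentY : ent r (fun om => om.2.1) = ent q (fun om => om.2.1) := by
      have h1 : ent r (fun om => om.2.1)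
          = ent (push r (fun om : X × Y × Fin n => (om.1, om.2.1))) Prod.snd :=
        ent_comp r (fun om => (om.1, om.2.1)) Prod.snd
      have h2 : ent q (fun om => om.2.1)
          = ent (push q (fun om : X × Y × W => (om.1, om.2.1))) Prod.snd :=
        ent_comp q (fun om => (om.1, om.2.1)) Prod.snd
      rw [h1, h2, hpush_eq]
    -- relabeling identities over r
    have hpair : ent r (fun om => ((om.1, om.2.1), om.2.2))
        = ent r (fun om => (om.1, om.2.1, om.2.2)) :=
      ent_congr r hr.1 _ _ (fun t => ((t.1, t.2.1), t.2.2))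
        (by
          intro u v h
          simp only [Prod.mk.injEq] at h
          exact Prod.ext_iff.2 ⟨h.1.1, Prod.ext_iff.2 ⟨h.1.2, h.2⟩⟩)
        (fun om _ => rfl)
    have hsub1 := submod r hr (fun om => om.1) (fun om => om.2.2) (fun om => om.2.1)
    have hsub2 := submod r hr (fun om => om.2.1) (fun om => om.2.2) (fun om => om.1)
    have e1 : ent r (fun om => (om.1, om.2.2, om.2.1))
        = ent r (fun om => (om.1, om.2.1, om.2.2)) :=
      ent_congr r hr.1 _ _ (fun t => (t.1, t.2.2, t.2.1))
        (by
          intro u v h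
          simp only [Prod.mk.injEq] at h
          exact Prod.ext_iff.2 ⟨h.1, Prod.ext_iff.2 ⟨h.2.2, h.2.1⟩⟩)
        (fun om _ => rfl)
    have e2 : ent r (fun om => (om.2.2, om.2.1)) = ent r (fun om => (om.2.1, om.2.2)) :=
      ent_congr r hr.1 _ _ Prod.swap Prod.swap_injective (fun om _ => rfl)
    have e3 : ent r (fun om => (om.2.1, om.2.2, om.1))
        = ent r (fun om => (om.1, om.2.1, om.2.2)) :=
      ent_congr r hr.1 _ _ (fun t => (t.2.1, t.2.2, t.1))
        (by
          intro u v h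
          simp only [Prod.mk.injEq] at h
          exact Prod.ext_iff.2 ⟨h.2.2, Prod.ext_iff.2 ⟨h.1, h.2.1⟩⟩)
        (fun om _ => rfl)
    have e4 : ent r (fun om => (om.2.1, om.1)) = ent r (fun om => (om.1, om.2.1)) :=
      ent_congr r hr.1 _ _ Prod.swap Prod.swap_injective (fun om _ => rfl)
    have e5 : ent r (fun om => (om.2.2, om.1)) = ent r (fun om => (om.1, om.2.2)) :=
      ent_congr r hr.1 _ _ Prod.swap Prod.swap_injective (fun om _ => rfl)
    rw [e1, e2] at hsub1
    rw [e3, e4, e5] at hsub2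
    rw [hpair]
    linarith [hentX, hentY, hentXY, hcmi, hsub1, hsub2]
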